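/- arXiv:0911.1638 — 3 statements merged into one kernel-verified Lean document; each statement's English description precedes it below -/
import Mathlib

section
/- Let G be a finitely generated linear group over a field. If G is nontrivial, then there exists a surjective homomorphism from G onto a nontrivial finite group. -/
/-- `ℤ` is a Jacobson ring. -/
lemma aux_isJacobsonRing_int : IsJacobsonRing ℤ := by
  rw [isJacobsonRing_iff_prime_eq]
  intro P hP
  by_cases hbot : P = ⊥
  · subst hbot
    refine le_antisymm ?_ Ideal.le_jacobson
    intro a ha
    rw [Ideal.jacobson, Ideal.mem_sInf] at ha
    by_contra hane
    have hane' : a ≠ 0 := by simpa [Ideal.mem_bot] using hane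
    obtain ⟨p, hple, hp⟩ := Nat.exists_infinite_primes (a.natAbs + 1)
    have hpp : Prime (p : ℤ) := by
      rw [Int.prime_iff_natAbs_prime]
      simpa using hp
    have hmax : (Ideal.span ({(p : ℤ)} : Set ℤ)).IsMaximal :=
      PrincipalIdealRing.isMaximal_of_irreducible hpp.irreducible
    have hmem : a ∈ Ideal.span ({(p : ℤ)} : Set ℤ) := ha ⟨bot_le, hmax⟩
    rw [Ideal.mem_span_singleton] at hmem
    have h1 : (p : ℤ) ∣ |a| := (dvd_abs _ _).mpr hmem
    have h2 : (p : ℤ) ≤ |a| := Int.le_of_dvd (abs_pos.mpr hane') h1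
    rw [Int.abs_eq_natAbs] at h2
    have h3 : p ≤ a.natAbs := by exact_mod_cast h2
    omega
  · haveI : P.IsMaximal := IsPrime.to_maximal_ideal hbot
    exact Ideal.jacobson_eq_self_of_isMaximal

/-- A field which is a finite `ℤ`-module is finite. -/
lemma aux_finite_of_field_int_finite (F : Type*) [Field F] [Module.Finite ℤ F] :
    Finite F := by
  obtain ⟨p, hp⟩ := CharP.exists F
  rcases CharP.char_is_prime_or_zero F p with h | h
  · haveI : Fact p.Prime := ⟨h⟩
    letI : Algebra (ZMod p) F := ZMod.algebra _ _
    haveI : Module.Finite (ZMod p) F :=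
      Module.Finite.of_restrictScalars_finite ℤ (ZMod p) F
    exact Module.finite_of_finite (ZMod p)
  · subst h
    haveI : CharZero F := CharP.charP_to_charZero F
    haveI : Algebra.IsIntegral ℤ F := Algebra.IsIntegral.of_finite ℤ F
    have hinj : Function.Injective (algebraMap ℤ F) := fun x y hxy => by
      simpa using hxy
    exact absurd (isField_of_isIntegral_of_isField hinj (Field.toIsField F))
      Int.not_isField

set_option maxHeartbeats 1000000 in
set_option synthInstance.maxHeartbeats 400000 in
/-- A nontrivial finitely generated linear group (subgroup of `GL(n, k)` for a field `k`)
admits a surjective homomorphism onto a nontrivial finite group. -/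
theorem fg_linear_group_has_nontrivial_finite_quotient (k : Type) [Field k] (n : ℕ)
    (G : Subgroup (Matrix.GeneralLinearGroup (Fin n) k)) (hG : G.FG) (hnt : G ≠ ⊥) :
    ∃ (H : Type) (_ : Group H) (_ : Finite H) (f : G →* H),
      Function.Surjective f ∧ Nontrivial H := by
  classical
  obtain ⟨S, hS⟩ := hG
  obtain ⟨⟨g, hgG⟩, hgne⟩ := Subgroup.ne_bot_iff_exists_ne_one.mp hnt
  -- the finite set of entries of the generators and their inverses
  set T : Set k := ⋃ s ∈ (S : Set (Matrix.GeneralLinearGroup (Fin n) k)),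
      ((Set.range fun p : Fin n × Fin n => (s : Matrix (Fin n) (Fin n) k) p.1 p.2) ∪
       (Set.range fun p : Fin n × Fin n => ((s⁻¹ : _) : Matrix (Fin n) (Fin n) k) p.1 p.2))
    with hT
  have hTfin : T.Finite :=
    Set.Finite.biUnion S.finite_toSet fun s _ =>
      (Set.finite_range _).union (Set.finite_range _)
  set A : Subalgebra ℤ k := Algebra.adjoin ℤ T with hA
  haveI hAft : Algebra.FiniteType ℤ A := by
    rw [← Subalgebra.fg_iff_finiteType]
    obtain ⟨t, ht⟩ := hTfin.exists_finset_coe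
    rw [hA, ← ht]
    exact Subalgebra.fg_adjoin_finset t
  have hone : ∀ i j : Fin n, (1 : Matrix (Fin n) (Fin n) k) i j ∈ A := by
    intro i j
    rw [Matrix.one_apply]
    split_ifs
    · exact A.one_mem
    · exact A.zero_mem
  -- the subgroup of matrices with entries (and inverse entries) in `A`
  let Γ : Subgroup (Matrix.GeneralLinearGroup (Fin n) k) :=
    { carrier := {x | (∀ i j, (x : Matrix (Fin n) (Fin n) k) i j ∈ A) ∧
        (∀ i j, ((x⁻¹ : Matrix.GeneralLinearGroup (Fin n) k) : Matrix (Fin n) (Fin n) k) i j ∈ A)}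
      one_mem' := ⟨fun i j => by simpa using hone i j, fun i j => by simpa using hone i j⟩
      mul_mem' := by
        rintro x y ⟨hx1, hx2⟩ ⟨hy1, hy2⟩
        refine ⟨fun i j => ?_, fun i j => ?_⟩
        · have h : ((x * y : Matrix.GeneralLinearGroup (Fin n) k) :
              Matrix (Fin n) (Fin n) k) i j
              = ∑ l, (x : Matrix (Fin n) (Fin n) k) i l * (y : Matrix (Fin n) (Fin n) k) l j := by
            simp [Units.val_mul, Matrix.mul_apply]
          rw [h]
          exact A.sum_mem fun l _ => A.mul_mem (hx1 i l) (hy1 l j)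
        · have h : (((x * y)⁻¹ : Matrix.GeneralLinearGroup (Fin n) k) :
              Matrix (Fin n) (Fin n) k) i j
              = ∑ l, ((y⁻¹ : Matrix.GeneralLinearGroup (Fin n) k) : Matrix (Fin n) (Fin n) k) i l *
                  ((x⁻¹ : Matrix.GeneralLinearGroup (Fin n) k) : Matrix (Fin n) (Fin n) k) l j := by
            rw [mul_inv_rev]
            simp [Units.val_mul, Matrix.mul_apply]
          rw [h]
          exact A.sum_mem fun l _ => A.mul_mem (hy2 i l) (hx2 l j)
      inv_mem' := by
        rintro x ⟨hx1, hx2⟩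
        exact ⟨hx2, fun i j => by rw [inv_inv]; exact hx1 i j⟩ }
  have hmemΓ : ∀ x : Matrix.GeneralLinearGroup (Fin n) k, x ∈ Γ ↔
      ((∀ i j, (x : Matrix (Fin n) (Fin n) k) i j ∈ A) ∧
        (∀ i j, ((x⁻¹ : Matrix.GeneralLinearGroup (Fin n) k) : Matrix (Fin n) (Fin n) k) i j ∈ A)) :=
    fun x => Iff.rfl
  have hSΓ : (S : Set (Matrix.GeneralLinearGroup (Fin n) k)) ⊆ Γ := by
    intro s hs
    rw [SetLike.mem_coe, hmemΓ]
    constructor <;> intro i j <;> refine Algebra.subset_adjoin ?_ <;>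
      refine Set.mem_biUnion hs ?_
    · exact Or.inl ⟨(i, j), rfl⟩
    · exact Or.inr ⟨(i, j), rfl⟩
  have hGΓ : G ≤ Γ := by
    rw [← hS]
    exact (Subgroup.closure_le Γ).mpr hSΓ
  have hgΓ : g ∈ Γ := hGΓ hgG
  -- a nonzero element of `A` witnessing `g ≠ 1`
  have hgm : (g : Matrix (Fin n) (Fin n) k) ≠ 1 := by
    intro h
    exact hgne (Subtype.ext (Units.ext h))
  obtain ⟨i₀, j₀, hij⟩ : ∃ i j, (g : Matrix (Fin n) (Fin n) k) i j ≠
      (1 : Matrix (Fin n) (Fin n) k) i j := by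
    by_contra h
    push_neg at h
    exact hgm (by ext i j; exact h i j)
  set a : A := ⟨(g : Matrix (Fin n) (Fin n) k) i₀ j₀ - (1 : Matrix (Fin n) (Fin n) k) i₀ j₀,
    A.sub_mem (hgΓ.1 i₀ j₀) (hone i₀ j₀)⟩ with haa
  have ha : a ≠ 0 := by
    intro h
    apply hij
    have := congrArg Subtype.val h
    exact sub_eq_zero.mp this
  -- a maximal ideal of `A` avoiding `a`
  haveI : IsJacobsonRing ℤ := aux_isJacobsonRing_int
  haveI : IsJacobsonRing A := isJacobsonRing_of_finiteType (A := ℤ) (B := A)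
  obtain ⟨m, hmmax, ham⟩ : ∃ m : Ideal A, m.IsMaximal ∧ a ∉ m := by
    by_contra h
    push_neg at h
    have hmem : a ∈ Ideal.jacobson (⊥ : Ideal A) := by
      rw [Ideal.jacobson, Ideal.mem_sInf]
      rintro J ⟨-, hJ⟩
      exact h J hJ
    rw [isJacobsonRing_iff_prime_eq.mp inferInstance ⊥ Ideal.bot_prime] at hmem
    exact ha (by simpa using hmem)
  haveI := hmmax
  set F := A ⧸ m with hF
  letI : Field F := Ideal.Quotient.field m
  haveI : Algebra.FiniteType ℤ F :=
    Algebra.FiniteType.of_surjective (Ideal.Quotient.mkₐ ℤ m)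
      (Ideal.Quotient.mkₐ_surjective ℤ m)
  haveI : Module.Finite ℤ F := finite_of_finite_type_of_isJacobsonRing ℤ F
  haveI : Finite F := aux_finite_of_field_int_finite F
  set φ : A →+* F := Ideal.Quotient.mk m with hφ
  -- matrices over `A` attached to elements of `Γ`
  set Me : Γ → Matrix (Fin n) (Fin n) A := fun x =>
    Matrix.of fun i j => (⟨(x.1 : Matrix (Fin n) (Fin n) k) i j, x.2.1 i j⟩ : A) with hMe
  have hMe_one : Me 1 = 1 := by
    ext i j
    simp [hMe, Matrix.one_apply, apply_ite (Subtype.val : A → k)]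
  have hMe_mul : ∀ x y : Γ, Me (x * y) = Me x * Me y := by
    intro x y
    ext i j
    simp [hMe, Matrix.mul_apply, Units.val_mul, AddSubmonoidClass.coe_finset_sum]
  have hMe_inv : ∀ x : Γ, Me x * Me x⁻¹ = 1 := by
    intro x
    rw [← hMe_mul, mul_inv_cancel, hMe_one]
  have hMe_inv' : ∀ x : Γ, Me x⁻¹ * Me x = 1 := by
    intro x
    rw [← hMe_mul, inv_mul_cancel, hMe_one]
  -- the homomorphism to `GL n F`
  set f : Γ →* Matrix.GeneralLinearGroup (Fin n) F :=
    { toFun := fun x =>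
        ⟨(Me x).map φ, (Me x⁻¹).map φ,
          by rw [← Matrix.map_mul, hMe_inv, Matrix.map_one φ φ.map_zero φ.map_one],
          by rw [← Matrix.map_mul, hMe_inv', Matrix.map_one φ φ.map_zero φ.map_one]⟩
      map_one' := by
        apply Units.ext
        show (Me 1).map φ = 1
        rw [hMe_one, Matrix.map_one φ φ.map_zero φ.map_one]
      map_mul' := by
        intro x y
        apply Units.ext
        show (Me (x * y)).map φ = (Me x).map φ * (Me y).map φ
        rw [hMe_mul, Matrix.map_mul] } with hf
  set f' : G →* Matrix.GeneralLinearGroup (Fin n) F := f.comp (Subgroup.inclusion hGΓ) with hf'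
  refine ⟨f'.range, inferInstance, inferInstance, f'.rangeRestrict,
    MonoidHom.rangeRestrict_surjective f', ?_⟩
  refine ⟨⟨f'.rangeRestrict ⟨g, hgG⟩, 1, ?_⟩⟩
  intro h
  have h2 : f' ⟨g, hgG⟩ = 1 := by
    have := congrArg Subtype.val h
    simpa using this
  have h3 : (Me ⟨g, hgΓ⟩).map φ = 1 := by
    have := congrArg Units.val h2
    simp [hf', hf] at this
    exact this
  have h4 : φ (Me ⟨g, hgΓ⟩ i₀ j₀) = φ ((1 : Matrix (Fin n) (Fin n) A) i₀ j₀) := by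
    have := congrFun (congrFun h3 i₀) j₀
    rw [Matrix.map_apply] at this
    rw [this]
    simp [Matrix.one_apply, apply_ite φ]
  apply ham
  have h5 : φ a = 0 := by
    have hval : a = Me ⟨g, hgΓ⟩ i₀ j₀ - (1 : Matrix (Fin n) (Fin n) A) i₀ j₀ := by
      apply Subtype.ext
      simp [haa, hMe, Matrix.one_apply, apply_ite (Subtype.val : A → k)]
    rw [hval, φ.map_sub, h4, sub_self]
  exact (Ideal.Quotient.eq_zero_iff_mem).mp h5
end

section
/- Let V be a finite-dimensional vector space over an algebraically closed field k of characteristic p > 0, and let φ : V → V be an additive map that is p-semilinear (φ(a·v) = a^p · φ(v)). Then V decomposes as a direct sum V = V_ss ⊕ V_nilp of φ-stable subspaces, where φ is bijective on V_ss and nilpotent on V_nilp. -/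
/-- Fitting decomposition for a `p`-semilinear endomorphism: let `V` be a finite-dimensional
vector space over an algebraically closed field `k` of characteristic `p > 0` and
`φ : V → V` additive with `φ (a • v) = a^p • φ v`.  Then `V = V_ss ⊕ V_nilp` with both
summands `φ`-stable, `φ` bijective on `V_ss` and nilpotent on `V_nilp`. -/
theorem semilinear_fitting_decomposition (k V : Type) [Field k] [IsAlgClosed k]
    (p : ℕ) [Fact (Nat.Prime p)] [CharP k p] [AddCommGroup V] [Module k V]
    [FiniteDimensional k V] (φ : V →+ V)
    (hsemi : ∀ (a : k) (v : V), φ (a • v) = a ^ p • φ v) :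
    ∃ Vss Vnilp : Submodule k V, IsCompl Vss Vnilp ∧
      (∀ v ∈ Vss, φ v ∈ Vss) ∧ (∀ v ∈ Vnilp, φ v ∈ Vnilp) ∧
      Set.BijOn (⇑φ) (Vss : Set V) (Vss : Set V) ∧
      ∃ t : ℕ, ∀ v ∈ Vnilp, (⇑φ)^[t] v = 0 := by
  have hp : 0 < p := (Fact.out : Nat.Prime p).pos
  -- iterated semilinearity
  have iter_semi : ∀ (n : ℕ) (a : k) (v : V), (⇑φ)^[n] (a • v) = a ^ p ^ n • (⇑φ)^[n] v := by
    intro n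
    induction n with
    | zero => intro a v; simp
    | succ n ih =>
      intro a v
      rw [Function.iterate_succ_apply, hsemi, ih, Function.iterate_succ_apply, ← pow_mul]
      congr 2
      rw [pow_succ, mul_comm]
  -- kernels
  set Kn : ℕ → Submodule k V := fun n =>
    { carrier := {v | (⇑φ)^[n] v = 0}
      add_mem' := by
        intro a b ha hb
        simp only [Set.mem_setOf_eq] at *
        rw [iterate_map_add, ha, hb, add_zero]
      zero_mem' := by simp [iterate_map_zero]
      smul_mem' := by
        intro a v hv
        simp only [Set.mem_setOf_eq] at *
        rw [iter_semi, hv, smul_zero] } with hKn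
  -- images
  set Wn : ℕ → Submodule k V := fun n =>
    { carrier := Set.range (⇑φ)^[n]
      add_mem' := by
        rintro a b ⟨x, rfl⟩ ⟨y, rfl⟩
        exact ⟨x + y, iterate_map_add φ n x y⟩
      zero_mem' := ⟨0, iterate_map_zero φ n⟩
      smul_mem' := by
        rintro a v ⟨x, rfl⟩
        obtain ⟨b, rfl⟩ := IsAlgClosed.exists_pow_nat_eq a (n := p ^ n) (pow_pos hp n)
        exact ⟨b • x, iter_semi n b x⟩ } with hWn
  have memK : ∀ (n : ℕ) (v : V), v ∈ Kn n ↔ (⇑φ)^[n] v = 0 := fun n v => Iff.rfl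
  have memW : ∀ (n : ℕ) (v : V), v ∈ Wn n ↔ ∃ x, (⇑φ)^[n] x = v := fun n v => Iff.rfl
  have Kmono : Monotone Kn := by
    apply monotone_nat_of_le_succ
    intro n v hv
    rw [memK] at *
    rw [Function.iterate_succ_apply', hv, map_zero]
  have Wanti : Antitone Wn := by
    apply antitone_nat_of_succ_le
    rintro n v ⟨x, rfl⟩
    exact ⟨φ x, (Function.iterate_succ_apply (⇑φ) n x).symm⟩
  obtain ⟨n₁, hn₁⟩ := monotone_stabilizes_iff_noetherian.mpr inferInstance ⟨Kn, Kmono⟩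
  obtain ⟨n₂, hn₂⟩ := IsArtinian.monotone_stabilizes (R := k) (M := V)
    ⟨fun n => OrderDual.toDual (Wn n), fun _ _ h => Wanti h⟩
  set t := max (max n₁ n₂) 1 with ht
  have htK : ∀ m, t ≤ m → Kn t = Kn m := by
    intro m hm
    have h1 : n₁ ≤ t := le_trans (le_max_left _ _) (le_max_left _ _)
    exact (hn₁ t h1).symm.trans (hn₁ m (le_trans h1 hm))
  have htW : ∀ m, t ≤ m → Wn t = Wn m := by
    intro m hm
    have h2 : n₂ ≤ t := le_trans (le_max_right _ _) (le_max_left _ _)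
    have := hn₂ t h2
    have h2m := hn₂ m (le_trans h2 hm)
    exact OrderDual.toDual.injective (this.symm.trans h2m)
  refine ⟨Wn t, Kn t, ?_, ?_, ?_, ?_, t, fun v hv => hv⟩
  · -- IsCompl
    constructor
    · -- disjoint
      rw [disjoint_iff_inf_le]
      rintro v ⟨⟨x, rfl⟩, hv2⟩
      have hx : x ∈ Kn (t + t) := by
        rw [memK, Function.iterate_add_apply]
        exact hv2
      rw [← htK (t + t) (Nat.le_add_right t t)] at hx
      rw [memK] at hx
      simp [hx]
    · -- codisjoint
      rw [codisjoint_iff_le_sup]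
      intro v _
      have hv : (⇑φ)^[t] v ∈ Wn (t + t) := by
        rw [← htW (t + t) (Nat.le_add_right t t)]
        exact ⟨v, rfl⟩
      obtain ⟨w, hw⟩ := hv
      rw [Function.iterate_add_apply] at hw
      refine Submodule.mem_sup.mpr ⟨(⇑φ)^[t] w, ⟨w, rfl⟩, v - (⇑φ)^[t] w, ?_, by abel⟩
      rw [memK, iterate_map_sub, hw]
      exact sub_self _
  · -- Wn t stable under φ
    rintro v ⟨x, rfl⟩
    have : φ ((⇑φ)^[t] x) ∈ Wn (t + 1) := ⟨x, Function.iterate_succ_apply' (⇑φ) t x⟩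
    exact Wanti (Nat.le_succ t) this
  · -- Kn t stable under φ
    intro v hv
    rw [memK] at *
    rw [← Function.iterate_succ_apply (⇑φ), Function.iterate_succ_apply', hv, map_zero]
  · -- BijOn
    refine ⟨?_, ?_, ?_⟩
    · rintro v ⟨x, rfl⟩
      exact Wanti (Nat.le_succ t) ⟨x, Function.iterate_succ_apply' (⇑φ) t x⟩
    · intro u hu v hv huv
      have hsub : u - v ∈ Kn (t + 1) := by
        rw [memK, Function.iterate_succ_apply, map_sub, huv, sub_self]
        simp
      rw [← htK (t + 1) (Nat.le_succ t)] at hsub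
      have hW : u - v ∈ Wn t := Submodule.sub_mem _ hu hv
      obtain ⟨x, hx⟩ := hW
      have h2t : x ∈ Kn (t + t) := by
        rw [memK, Function.iterate_add_apply, hx]
        exact hsub
      rw [← htK (t + t) (Nat.le_add_right t t), memK] at h2t
      have h0 : u - v = 0 := by rw [← hx]; exact h2t
      rw [sub_eq_zero] at h0
      exact h0
    · rintro v ⟨x, rfl⟩
      have : (⇑φ)^[t] x ∈ Wn (t + 1) := by
        rw [← htW (t + 1) (Nat.le_succ t)]
        exact ⟨x, rfl⟩
      obtain ⟨y, hy⟩ := this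
      rw [Function.iterate_succ_apply'] at hy
      exact ⟨(⇑φ)^[t] y, ⟨y, rfl⟩, hy⟩
end

section
/- Let E be a vector bundle on a projective variety X over an algebraically closed field. Then E is Nori semistable if and only if both E and its dual E^∨ are numerically effective. -/
section

/- Abstract setting: `Bundle` is the type of vector bundles on a projective variety `X`
over an algebraically closed field, `I` indexes the pairs `(C, f)` of a smooth projective
curve `C` with a morphism `f : C → X`, and `pull i E` is the pullback `f^* E` on the curve
indexed by `i`.  `CSheaf` is the type of coherent sheaves on the curves, with degree `deg`,
rank `rk`, subsheaf relation `Sub`, quotient relation `Quot` and dual `dual`. -/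
variable (Bundle I CSheaf : Type)
  (deg : CSheaf → ℤ) (rk : CSheaf → ℕ)
  (Sub Quot : CSheaf → CSheaf → Prop) (dual : CSheaf → CSheaf)
  (pull : I → Bundle → CSheaf) (Bdual : Bundle → Bundle)

/-- `E` is Nori semistable: for every curve-morphism `i = (C, f : C → X)`, the pullback
`f^* E` is semistable of degree `0`. -/
def NoriSemistable (E : Bundle) : Prop :=
  ∀ i : I, deg (pull i E) = 0 ∧
    ∀ W, Sub W (pull i E) → 0 < rk W → (deg W : ℚ) / (rk W : ℚ) ≤ 0

/-- `E` is numerically effective: for every curve-morphism `i = (C, f : C → X)`, the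
minimal slope of `f^* E` is nonnegative, i.e. every nonzero quotient bundle of `f^* E` has
nonnegative slope. -/
def NumericallyEffective (E : Bundle) : Prop :=
  ∀ i : I, ∀ Q, Quot Q (pull i E) → 0 < rk Q → 0 ≤ (deg Q : ℚ) / (rk Q : ℚ)

/-- A vector bundle `E` on a projective variety `X` is Nori semistable if and only if both
`E` and its dual `E^∨` are numerically effective.  The hypotheses encode standard facts on
curves: every sheaf is a quotient of itself; a quotient has a kernel with additive degree
and rank (rank-0 kernels being torsion of degree 0); duality exchanges degree signs and
preserves rank; subsheaves of `G` correspond to quotients of `dual G` and conversely; and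
pullback commutes with duals, with pullbacks of bundles having positive rank. -/
theorem noriSemistable_iff_nef_and_dual_nef
    (hQself : ∀ G : CSheaf, Quot G G)
    (hker : ∀ G Q, Quot Q G → ∃ W, deg W + deg Q = deg G ∧ rk W + rk Q = rk G ∧
      (rk W = 0 → deg W = 0) ∧ (0 < rk W → Sub W G))
    (hdualdeg : ∀ G, deg (dual G) = -deg G ∧ rk (dual G) = rk G)
    (hdualsub : ∀ G W, Sub W G → ∃ Q, Quot Q (dual G) ∧ deg Q = -deg W ∧ rk Q = rk W)
    (hdualquot : ∀ G Q, Quot Q (dual G) → ∃ W, Sub W G ∧ deg W = -deg Q ∧ rk W = rk Q)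
    (hpulldual : ∀ (i : I) (E : Bundle), pull i (Bdual E) = dual (pull i E))
    (hrkpull : ∀ (i : I) (E : Bundle), 0 < rk (pull i E))
    (E : Bundle) :
    NoriSemistable Bundle I CSheaf deg rk Sub pull E ↔
      NumericallyEffective Bundle I CSheaf deg rk Quot pull E ∧
      NumericallyEffective Bundle I CSheaf deg rk Quot pull (Bdual E) := by
  constructor
  · intro hNS
    constructor
    · intro i Q hQ hrkQ
      obtain ⟨hdeg0, hsub⟩ := hNS i
      obtain ⟨W, hd, hr, h0, hS⟩ := hker _ _ hQ
      have hdQ : (0:ℤ) ≤ deg Q := by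
        rcases Nat.eq_zero_or_pos (rk W) with h | h
        · have := h0 h; omega
        · have hs := hsub W (hS h) h
          have : (deg W : ℚ) ≤ 0 := by
            have hrpos : (0:ℚ) < (rk W : ℚ) := by exact_mod_cast h
            by_contra hc; push_neg at hc
            exact absurd hs (not_le.mpr (div_pos hc hrpos))
          have : deg W ≤ 0 := by exact_mod_cast this
          omega
      apply div_nonneg
      · exact_mod_cast hdQ
      · positivity
    · intro i Q hQ hrkQ
      rw [hpulldual] at hQ
      obtain ⟨W, hS, hd, hr⟩ := hdualquot _ _ hQ
      obtain ⟨hdeg0, hsub⟩ := hNS i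
      have hrkW : 0 < rk W := hr ▸ hrkQ
      have hs := hsub W hS hrkW
      have hrpos : (0:ℚ) < (rk W : ℚ) := by exact_mod_cast hrkW
      have hW : (deg W : ℚ) ≤ 0 := by
        by_contra hc; push_neg at hc
        exact absurd hs (not_le.mpr (div_pos hc hrpos))
      have hWZ : deg W ≤ 0 := by exact_mod_cast hW
      have hdQ : (0:ℤ) ≤ deg Q := by omega
      apply div_nonneg
      · exact_mod_cast hdQ
      · positivity
  · rintro ⟨hnef, hnefd⟩ i
    have hrk := hrkpull i E
    have h1 := hnef i _ (hQself _) hrk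
    have h2 := hnefd i _ (hQself _) (by rw [hpulldual]; rw [(hdualdeg _).2]; exact hrk)
    rw [hpulldual] at h2
    have hrpos : (0:ℚ) < (rk (pull i E) : ℚ) := by exact_mod_cast hrk
    have hd1 : (0:ℤ) ≤ deg (pull i E) := by
      have : (0:ℚ) ≤ (deg (pull i E) : ℚ) := by
        by_contra h; push_neg at h
        exact absurd h1 (not_le.mpr (div_neg_of_neg_of_pos h hrpos))
      exact_mod_cast this
    have hd2 : (0:ℤ) ≤ deg (dual (pull i E)) := by
      have hrpos2 : (0:ℚ) < (rk (dual (pull i E)) : ℚ) := by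
        rw [(hdualdeg _).2]; exact hrpos
      have : (0:ℚ) ≤ (deg (dual (pull i E)) : ℚ) := by
        by_contra h
        push_neg at h
        exact absurd h2 (not_le.mpr (div_neg_of_neg_of_pos h hrpos2))
      exact_mod_cast this
    have hdeg0 : deg (pull i E) = 0 := by
      have := (hdualdeg (pull i E)).1; omega
    refine ⟨hdeg0, fun W hS hrkW => ?_⟩
    obtain ⟨Q, hQ, hd, hr⟩ := hdualsub _ _ hS
    rw [← hpulldual] at hQ
    have hQnef := hnefd i Q hQ (hr ▸ hrkW)
    have hrQpos : (0:ℚ) < (rk Q : ℚ) := by exact_mod_cast hr ▸ hrkW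
    have : (0:ℚ) ≤ (deg Q : ℚ) := by
      by_contra h
      push_neg at h
      exact absurd hQnef (not_le.mpr (div_neg_of_neg_of_pos h hrQpos))
    have hQZ : (0:ℤ) ≤ deg Q := by exact_mod_cast this
    have hWZ : deg W ≤ 0 := by omega
    apply div_nonpos_of_nonpos_of_nonneg
    · exact_mod_cast hWZ
    · positivity


end
end
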